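/- Let G be a finite simple graph with N ≥ 1 vertices and M edges such that 2M ≥ N, let A be its adjacency matrix over ℝ, and let λ_1, …, λ_N be the eigenvalues of A counted with multiplicity. Then the graph energy satisfies the Koolen–Moulton bound E(G) = Σ_{i=1}^{N} |λ_i| ≤ 2M/N + √((N−1)·(2M − (2M/N)²)). -/

import Mathlib

open Matrix Finset

/-- Monotonicity of `x ↦ x + √(c(S - x²))` past the critical point. -/
lemma km_mono {c S x y : ℝ} (hc : 0 ≤ c) (hy : 0 ≤ y) (hxy : y ≤ x)
    (hxS : x ^ 2 ≤ S) (hS : S ≤ (c + 1) * y ^ 2) :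
    x + Real.sqrt (c * (S - x ^ 2)) ≤ y + Real.sqrt (c * (S - y ^ 2)) := by
  have hx : 0 ≤ x := le_trans hy hxy
  have hy2x2 : y ^ 2 ≤ x ^ 2 := by nlinarith
  have ha : 0 ≤ c * (S - x ^ 2) := mul_nonneg hc (by linarith)
  have hb : 0 ≤ c * (S - y ^ 2) := mul_nonneg hc (by nlinarith)
  set sa := Real.sqrt (c * (S - x ^ 2)) with hsa_def
  set sb := Real.sqrt (c * (S - y ^ 2)) with hsb_def
  have hsa0 : 0 ≤ sa := Real.sqrt_nonneg _
  have hsb0 : 0 ≤ sb := Real.sqrt_nonneg _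
  have hsa2 : sa ^ 2 = c * (S - x ^ 2) := Real.sq_sqrt ha
  have hsb2 : sb ^ 2 = c * (S - y ^ 2) := Real.sq_sqrt hb
  have hsab : sa ≤ sb := by
    apply Real.sqrt_le_sqrt
    nlinarith
  have hsb_le : sb ≤ c * y := by
    have h1 : c * (S - y ^ 2) ≤ (c * y) ^ 2 := by nlinarith
    calc sb ≤ Real.sqrt ((c * y) ^ 2) := Real.sqrt_le_sqrt h1
      _ = c * y := Real.sqrt_sq (mul_nonneg hc hy)
  rcases eq_or_lt_of_le (add_nonneg hsa0 hsb0) with hz | hpos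
  · -- sa + sb = 0, hence sa = sb = 0
    have hsa : sa = 0 := by linarith
    have hsb : sb = 0 := by linarith
    have h0 : c * (S - y ^ 2) = 0 := by rw [← hsb2, hsb]; ring
    rcases mul_eq_zero.mp h0 with hc0 | hSy
    · -- c = 0, so S ≤ y², and x² ≤ S gives x ≤ y
      rw [hsa, hsb]
      rw [hc0] at hS
      nlinarith
    · rw [hsa, hsb]
      nlinarith
  · -- sa + sb > 0
    have key : (x - y) * (sa + sb) ≤ (sb - sa) * (sa + sb) := by
      have h1 : sa + sb ≤ c * (x + y) := by nlinarith
      have h2 : (sb - sa) * (sa + sb) = c * (x + y) * (x - y) := by nlinarith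
      rw [h2]
      have := mul_le_mul_of_nonneg_right h1 (sub_nonneg.mpr hxy)
      nlinarith
    have := le_of_mul_le_mul_right (by linarith [key] :
      (x - y) * (sa + sb) ≤ (sb - sa) * (sa + sb)) hpos
    linarith

/-- **Koolen–Moulton bound.** For a finite simple graph `G` with `N ≥ 1`
vertices and `M` edges such that `2M ≥ N`, with real symmetric adjacency matrix `A` and
eigenvalues `λ₁, …, λ_N` (counted with multiplicity), the graph energy satisfies
`E(G) = ∑ i, |λ i| ≤ 2M/N + √((N-1)·(2M - (2M/N)²))`. -/
theorem stmt_14 {V : Type*} [Fintype V] [DecidableEq V]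
    (G : SimpleGraph V) [DecidableRel G.Adj]
    (N M : ℕ) (hN : N = Fintype.card V) (hM : M = G.edgeFinset.card)
    (hN1 : 1 ≤ N) (h2M : N ≤ 2 * M)
    (hA : (G.adjMatrix ℝ).IsHermitian) :
    ∑ i, |hA.eigenvalues i| ≤
      2 * (M : ℝ) / (N : ℝ) +
        Real.sqrt (((N : ℝ) - 1) * (2 * (M : ℝ) - (2 * (M : ℝ) / (N : ℝ)) ^ 2)) := by
  classical
  have hV : Nonempty V := by
    rw [← Fintype.card_pos_iff, ← hN]; omega
  set A := G.adjMatrix ℝ with hAdef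
  set lam := hA.eigenvalues with hlam
  set Uc : Matrix V V ℝ := (hA.eigenvectorUnitary : Matrix V V ℝ) with hUc
  have hUU : Uc * star Uc = 1 := (Matrix.mem_unitaryGroup_iff).mp hA.eigenvectorUnitary.2
  have hUU' : star Uc * Uc = 1 := (Matrix.mem_unitaryGroup_iff').mp hA.eigenvectorUnitary.2
  have hofReal : (RCLike.ofReal ∘ lam : V → ℝ) = lam := by
    funext i; simp [RCLike.ofReal]
  have hspec : A = Uc * diagonal lam * star Uc := by
    have := hA.spectral_theorem
    rwa [hofReal] at this
  -- transpose trick over ℝ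
  have hdotswap : ∀ (B : Matrix V V ℝ) (x y : V → ℝ),
      x ⬝ᵥ (B *ᵥ y) = (star B *ᵥ x) ⬝ᵥ y := by
    intro B x y
    rw [Matrix.dotProduct_mulVec, Matrix.star_eq_conjTranspose, conjTranspose_eq_transpose_of_trivial,
      Matrix.mulVec_transpose]
  set ones : V → ℝ := fun _ => 1 with hones
  set w : V → ℝ := star Uc *ᵥ ones with hw
  have hNpos : (0 : ℝ) < N := by exact_mod_cast hN1
  -- ∑ w i ^ 2 = N
  have hwsum : ∑ i, w i ^ 2 = (N : ℝ) := by
    have h1 : ones ⬝ᵥ (Uc *ᵥ w) = w ⬝ᵥ w := hdotswap Uc ones w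
    have h2 : Uc *ᵥ w = ones := by
      rw [hw, Matrix.mulVec_mulVec, hUU, Matrix.one_mulVec]
    rw [h2] at h1
    have h3 : ones ⬝ᵥ ones = (N : ℝ) := by
      simp [hones, dotProduct, hN]
    rw [← h3, h1]
    simp [dotProduct, sq]
  -- quadratic form
  have hquad : ones ⬝ᵥ (A *ᵥ ones) = ∑ i, lam i * w i ^ 2 := by
    rw [hspec, Matrix.mul_assoc, ← Matrix.mulVec_mulVec, hdotswap, ← hw,
      ← Matrix.mulVec_mulVec, ← hw]
    simp only [dotProduct, Matrix.mulVec_diagonal]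
    apply Finset.sum_congr rfl
    intro i _
    ring
  have hAx : ones ⬝ᵥ (A *ᵥ ones) = 2 * (M : ℝ) := by
    have : ∀ v, (A *ᵥ ones) v = (G.degree v : ℝ) := by
      intro v
      rw [hAdef, hones, SimpleGraph.adjMatrix_mulVec_apply, Finset.sum_const,
        SimpleGraph.degree]
      simp
    simp only [dotProduct, this, hones, one_mul]
    change ∑ x, (A *ᵥ ones) x = _
    simp only [this]
    rw [← Nat.cast_sum]
    rw [SimpleGraph.sum_degrees_eq_twice_card_edges]
    push_cast [hM]
    ring
  have hsum_lam_w : ∑ i, lam i * w i ^ 2 = 2 * (M : ℝ) := by rw [← hquad, hAx]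
  -- sum of squares of eigenvalues
  have hsumsq : ∑ i, lam i ^ 2 = 2 * (M : ℝ) := by
    have htr : Matrix.trace (A * A) = ∑ i, lam i ^ 2 := by
      rw [hspec]
      have : (Uc * diagonal lam * star Uc) * (Uc * diagonal lam * star Uc)
          = Uc * (diagonal lam * diagonal lam) * star Uc := by
        simp only [Matrix.mul_assoc]
        rw [← Matrix.mul_assoc (star Uc) Uc, hUU', Matrix.one_mul]
      rw [this, Matrix.trace_mul_comm, ← Matrix.mul_assoc, ← Matrix.mul_assoc, hUU',
        Matrix.one_mul, Matrix.diagonal_mul_diagonal, Matrix.trace_diagonal]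
      apply Finset.sum_congr rfl
      intro i _; ring
    have htr2 : Matrix.trace (A * A) = 2 * (M : ℝ) := by
      rw [Matrix.trace]
      simp only [Matrix.diag_apply, hAdef, SimpleGraph.adjMatrix_mul_self_apply_self]
      rw [← Nat.cast_sum, SimpleGraph.sum_degrees_eq_twice_card_edges]
      push_cast [hM]
      ring
    rw [← htr, htr2]
  -- max eigenvalue
  obtain ⟨i₀, -, hmax⟩ := Finset.exists_max_image Finset.univ lam ⟨Classical.arbitrary V, Finset.mem_univ _⟩
  have hmax' : ∀ j, lam j ≤ lam i₀ := fun j => hmax j (Finset.mem_univ j)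
  have hge : 2 * (M : ℝ) / N ≤ lam i₀ := by
    rw [div_le_iff₀ hNpos]
    calc 2 * (M : ℝ) = ∑ i, lam i * w i ^ 2 := hsum_lam_w.symm
      _ ≤ ∑ i, lam i₀ * w i ^ 2 :=
        Finset.sum_le_sum fun i _ => mul_le_mul_of_nonneg_right (hmax' i) (sq_nonneg _)
      _ = lam i₀ * ∑ i, w i ^ 2 := by rw [Finset.mul_sum]
      _ = lam i₀ * N := by rw [hwsum]
  have hx2 : lam i₀ ^ 2 ≤ 2 * (M : ℝ) := by
    rw [← hsumsq]
    exact Finset.single_le_sum (fun i _ => sq_nonneg (lam i)) (Finset.mem_univ i₀)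
  have hypos : (0:ℝ) ≤ 2 * (M : ℝ) / N := by positivity
  have hi₀pos : 0 ≤ lam i₀ := le_trans hypos hge
  -- Cauchy–Schwarz on the others
  have hcard : ((Finset.univ.erase i₀).card : ℝ) = (N : ℝ) - 1 := by
    rw [Finset.card_erase_of_mem (Finset.mem_univ i₀), Finset.card_univ, ← hN,
      Nat.cast_sub hN1, Nat.cast_one]
  have herase_sq : ∑ i ∈ Finset.univ.erase i₀, lam i ^ 2 = 2 * (M : ℝ) - lam i₀ ^ 2 := by
    have h := Finset.add_sum_erase Finset.univ (fun i => lam i ^ 2) (Finset.mem_univ i₀)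
    have h' : lam i₀ ^ 2 + ∑ i ∈ Finset.univ.erase i₀, lam i ^ 2 = ∑ i, lam i ^ 2 := h
    rw [hsumsq] at h'
    linarith
  have hCS : ∑ i ∈ Finset.univ.erase i₀, |lam i| ≤
      Real.sqrt (((N : ℝ) - 1) * (2 * (M : ℝ) - lam i₀ ^ 2)) := by
    rw [show ((N:ℝ) - 1) * (2 * (M : ℝ) - lam i₀ ^ 2)
        = ((Finset.univ.erase i₀).card : ℝ) * ∑ i ∈ Finset.univ.erase i₀, lam i ^ 2 by
      rw [hcard, herase_sq]]
    apply Real.le_sqrt_of_sq_le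
    calc (∑ i ∈ Finset.univ.erase i₀, |lam i|) ^ 2
        ≤ ((Finset.univ.erase i₀).card : ℝ) * ∑ i ∈ Finset.univ.erase i₀, |lam i| ^ 2 :=
          sq_sum_le_card_mul_sum_sq
      _ = ((Finset.univ.erase i₀).card : ℝ) * ∑ i ∈ Finset.univ.erase i₀, lam i ^ 2 := by
          simp [sq_abs]
  have hsplit : ∑ i, |lam i| = lam i₀ + ∑ i ∈ Finset.univ.erase i₀, |lam i| := by
    have h := Finset.add_sum_erase Finset.univ (fun i => |lam i|) (Finset.mem_univ i₀)
    have h' : |lam i₀| + ∑ i ∈ Finset.univ.erase i₀, |lam i| = ∑ i, |lam i| := h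
    rw [← h', abs_of_nonneg hi₀pos]
  rw [hsplit]
  have hkey := km_mono (c := (N:ℝ) - 1) (S := 2 * (M:ℝ)) (x := lam i₀) (y := 2 * (M:ℝ) / N)
    (by simp; exact_mod_cast hN1) hypos hge hx2
    (by
      have hMpos : (1:ℝ) ≤ 2 * (M:ℝ) / N := by
        rw [le_div_iff₀ hNpos]
        have : (N : ℝ) ≤ 2 * M := by exact_mod_cast h2M
        linarith
      have : ((N:ℝ) - 1 + 1) = (N:ℝ) := by ring
      rw [this]
      have hNy : (N:ℝ) * (2 * (M:ℝ) / N) = 2 * M := by field_simp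
      nlinarith [hypos])
  calc lam i₀ + ∑ i ∈ Finset.univ.erase i₀, |lam i|
      ≤ lam i₀ + Real.sqrt (((N : ℝ) - 1) * (2 * (M : ℝ) - lam i₀ ^ 2)) := by linarith [hCS]
    _ ≤ 2 * (M : ℝ) / N + Real.sqrt (((N:ℝ) - 1) * (2 * (M:ℝ) - (2 * (M:ℝ) / N) ^ 2)) := hkey
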